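/- arXiv:2601.19597 — 2 statements merged into one kernel-verified Lean document; each statement's English description precedes it below -/
import Mathlib

section
/- Let (Z, μ) be a finite measure space and let q_θ, q_φ, q̃_θ, q̃_φ be probability densities, all strictly positive μ-a.e. Suppose q_θ ≥ c, q_φ ≥ c for some c > 0, and ‖q̃_θ − q_θ‖_∞ ≤ ε_θ ≤ c/2, ‖q̃_φ − q_φ‖_∞ ≤ ε_φ ≤ c/2. Then |½(D_KL(q_θ ‖ q̃_φ) − D_KL(q_θ ‖ q_φ)) + ½(D_KL(q_φ ‖ q̃_θ) − D_KL(q_φ ‖ q_θ))| ≤ (ε_θ + ε_φ)/c. -/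
open MeasureTheory

private lemma log_lip_aux {c a b : ℝ} (hc : 0 < c) (ha : c/2 ≤ a) (hb : c/2 ≤ b) :
    |Real.log a - Real.log b| ≤ 2/c * |a - b| := by
  have ha0 : 0 < a := lt_of_lt_of_le (by linarith) ha
  have hb0 : 0 < b := lt_of_lt_of_le (by linarith) hb
  have key : ∀ x y : ℝ, 0 < x → c/2 ≤ y → Real.log x - Real.log y ≤ 2/c * |x - y| := by
    intro x y hx hy
    have hy0 : 0 < y := lt_of_lt_of_le (by linarith) hy
    have h1 : Real.log x - Real.log y = Real.log (x / y) := (Real.log_div hx.ne' hy0.ne').symm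
    have h2 : Real.log (x / y) ≤ x / y - 1 := Real.log_le_sub_one_of_pos (div_pos hx hy0)
    have h3 : x / y - 1 = (x - y) / y := by field_simp
    have h4 : (x - y) / y ≤ |x - y| / (c/2) := by
      apply div_le_div₀ (abs_nonneg _) (le_abs_self _) (by linarith) hy
    have h5 : |x - y| / (c/2) = 2/c * |x - y| := by field_simp
    linarith [h1 ▸ h2]
  rw [abs_sub_le_iff]
  constructor
  · exact key a b ha0 hb
  · have := key b a hb0 ha
    rwa [abs_sub_comm] at this
  
private lemma kl_diff_bound {Z : Type*} [MeasurableSpace Z] (μ : Measure Z)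
    (p q qt : Z → ℝ) (c ε : ℝ) (hc : 0 < c)
    (hpint : Integrable p μ) (hpmass : ∫ z, p z ∂μ = 1) (hpc : ∀ᵐ z ∂μ, c ≤ p z)
    (hqc : ∀ᵐ z ∂μ, c ≤ q z)
    (hε : ∀ᵐ z ∂μ, |qt z - q z| ≤ ε) (hεle : ε ≤ c / 2)
    (h1 : Integrable (fun z => p z * Real.log (p z / qt z)) μ)
    (h2 : Integrable (fun z => p z * Real.log (p z / q z)) μ) :
    |∫ z, p z * Real.log (p z / qt z) ∂μ - ∫ z, p z * Real.log (p z / q z) ∂μ| ≤ 2 * ε / c := by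
  rw [← integral_sub h1 h2]
  have hbound : ∀ᵐ z ∂μ, ‖p z * Real.log (p z / qt z) - p z * Real.log (p z / q z)‖
      ≤ (2 * ε / c) * p z := by
    filter_upwards [hpc, hqc, hε] with z hp hq he
    have hp0 : 0 < p z := lt_of_lt_of_le hc hp
    have hq0 : 0 < q z := lt_of_lt_of_le hc hq
    have hqt : c/2 ≤ qt z := by
      have := abs_le.mp he
      linarith
    have hqt0 : 0 < qt z := lt_of_lt_of_le (by linarith) hqt
    have heq : p z * Real.log (p z / qt z) - p z * Real.log (p z / q z)
        = p z * (Real.log (q z) - Real.log (qt z)) := by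
      rw [Real.log_div hp0.ne' hqt0.ne', Real.log_div hp0.ne' hq0.ne']
      ring
    rw [heq, Real.norm_eq_abs, abs_mul, abs_of_pos hp0, mul_comm ((2:ℝ) * ε / c) (p z)]
    apply mul_le_mul_of_nonneg_left _ hp0.le
    have := log_lip_aux hc (by linarith : c/2 ≤ q z) hqt
    have h' : |q z - qt z| ≤ ε := by rwa [abs_sub_comm] at he
    calc |Real.log (q z) - Real.log (qt z)| ≤ 2/c * |q z - qt z| := this
      _ ≤ 2/c * ε := by
          apply mul_le_mul_of_nonneg_left h' (by positivity)
      _ = 2 * ε / c := by ring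
  have key := norm_integral_le_of_norm_le ((hpint.const_mul (2 * ε / c))) hbound
  rw [integral_const_mul, hpmass, mul_one] at key
  simpa using key

/-- Multimodal KDE perturbation bound: the symmetrized difference of KL divergences
against smoothed densities is controlled by the sup-norm KDE errors. -/
theorem mm_klDiv_perturbation_bound {Z : Type*} [MeasurableSpace Z] (μ : Measure Z)
    [IsFiniteMeasure μ] (qθ qφ qtθ qtφ : Z → ℝ) (c εθ εφ : ℝ) (hc : 0 < c)
    (hqθint : Integrable qθ μ) (hqθmass : ∫ z, qθ z ∂μ = 1) (hqθc : ∀ᵐ z ∂μ, c ≤ qθ z)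
    (hqφint : Integrable qφ μ) (hqφmass : ∫ z, qφ z ∂μ = 1) (hqφc : ∀ᵐ z ∂μ, c ≤ qφ z)
    (hqtθint : Integrable qtθ μ) (hqtθmass : ∫ z, qtθ z ∂μ = 1)
    (hqtθpos : ∀ᵐ z ∂μ, 0 < qtθ z)
    (hqtφint : Integrable qtφ μ) (hqtφmass : ∫ z, qtφ z ∂μ = 1)
    (hqtφpos : ∀ᵐ z ∂μ, 0 < qtφ z)
    (hεθ : ∀ᵐ z ∂μ, |qtθ z - qθ z| ≤ εθ) (hεθle : εθ ≤ c / 2)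
    (hεφ : ∀ᵐ z ∂μ, |qtφ z - qφ z| ≤ εφ) (hεφle : εφ ≤ c / 2)
    (h₁ : Integrable (fun z => qθ z * Real.log (qθ z / qtφ z)) μ)
    (h₂ : Integrable (fun z => qθ z * Real.log (qθ z / qφ z)) μ)
    (h₃ : Integrable (fun z => qφ z * Real.log (qφ z / qtθ z)) μ)
    (h₄ : Integrable (fun z => qφ z * Real.log (qφ z / qθ z)) μ) :
    |(1 / 2) * (∫ z, qθ z * Real.log (qθ z / qtφ z) ∂μ - ∫ z, qθ z * Real.log (qθ z / qφ z) ∂μ)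
      + (1 / 2) * (∫ z, qφ z * Real.log (qφ z / qtθ z) ∂μ
          - ∫ z, qφ z * Real.log (qφ z / qθ z) ∂μ)|
      ≤ (εθ + εφ) / c := by
  have A := kl_diff_bound μ qθ qφ qtφ c εφ hc hqθint hqθmass hqθc hqφc hεφ hεφle h₁ h₂
  have B := kl_diff_bound μ qφ qθ qtθ c εθ hc hqφint hqφmass hqφc hqθc hεθ hεθle h₃ h₄
  calc |(1 / 2) * (∫ z, qθ z * Real.log (qθ z / qtφ z) ∂μ - ∫ z, qθ z * Real.log (qθ z / qφ z) ∂μ)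
      + (1 / 2) * (∫ z, qφ z * Real.log (qφ z / qtθ z) ∂μ
          - ∫ z, qφ z * Real.log (qφ z / qθ z) ∂μ)|
      ≤ |(1 / 2) * (∫ z, qθ z * Real.log (qθ z / qtφ z) ∂μ
            - ∫ z, qθ z * Real.log (qθ z / qφ z) ∂μ)|
        + |(1 / 2) * (∫ z, qφ z * Real.log (qφ z / qtθ z) ∂μ
            - ∫ z, qφ z * Real.log (qφ z / qθ z) ∂μ)| := abs_add_le _ _
    _ ≤ (1/2) * (2 * εφ / c) + (1/2) * (2 * εθ / c) := by
        rw [abs_mul, abs_mul]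
        gcongr <;> simp [abs_of_nonneg] <;> linarith
    _ = (εθ + εφ) / c := by ring
end

section
/- Let P, S : ℝᵖ → ℝ be differentiable with 0 < m ≤ P ≤ M, ‖∇P‖ ≤ G, S ≥ N·m, and ‖∇S‖ ≤ N·G at a given point, for constants m, M, G > 0 and N ≥ 1. Then the difference of log-gradients satisfies ‖∇log(P + S) − ∇log S‖ ≤ G/(N·m) + M·G/(N·m²), which is O(1/N). -/
/-- Removing the positive term from the log-partition gradient: under the stated
pointwise bounds, `‖∇log(P+S) - ∇log S‖ ≤ G/(N·m) + M·G/(N·m²)`, i.e. `O(1/N)`. -/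
theorem log_partition_gradient_difference_bound {p : ℕ}
    (P S : EuclideanSpace ℝ (Fin p) → ℝ) (x : EuclideanSpace ℝ (Fin p))
    (hPd : DifferentiableAt ℝ P x) (hSd : DifferentiableAt ℝ S x)
    (m M G N : ℝ) (hm : 0 < m) (hM : 0 < M) (hG : 0 < G) (hN : 1 ≤ N)
    (hmP : m ≤ P x) (hPM : P x ≤ M) (hPG : ‖fderiv ℝ P x‖ ≤ G)
    (hS : N * m ≤ S x) (hSG : ‖fderiv ℝ S x‖ ≤ N * G) :
    ‖fderiv ℝ (fun y => Real.log (P y + S y)) x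
        - fderiv ℝ (fun y => Real.log (S y)) x‖
      ≤ G / (N * m) + M * G / (N * m ^ 2) := by
  have hN0 : (0:ℝ) < N := lt_of_lt_of_le one_pos hN
  have hNm : (0:ℝ) < N * m := mul_pos hN0 hm
  have hs : 0 < S x := lt_of_lt_of_le hNm hS
  have ha : 0 < P x := lt_of_lt_of_le hm hmP
  have has : 0 < P x + S x := by linarith
  have h1 : HasFDerivAt (fun y => Real.log (P y + S y))
      ((P x + S x)⁻¹ • (fderiv ℝ P x + fderiv ℝ S x)) x :=
    (hPd.hasFDerivAt.add hSd.hasFDerivAt).log (ne_of_gt has)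
  have h2 : HasFDerivAt (fun y => Real.log (S y)) ((S x)⁻¹ • fderiv ℝ S x) x :=
    hSd.hasFDerivAt.log (ne_of_gt hs)
  rw [h1.fderiv, h2.fderiv]
  have key : (P x + S x)⁻¹ • (fderiv ℝ P x + fderiv ℝ S x) - (S x)⁻¹ • fderiv ℝ S x
      = (P x + S x)⁻¹ • fderiv ℝ P x + ((P x + S x)⁻¹ - (S x)⁻¹) • fderiv ℝ S x := by
    rw [smul_add, sub_smul]; abel
  rw [key]
  have hb1 : ‖(P x + S x)⁻¹ • fderiv ℝ P x‖ ≤ G / (N * m) := by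
    rw [norm_smul, Real.norm_eq_abs, abs_of_pos (inv_pos.mpr has)]
    calc (P x + S x)⁻¹ * ‖fderiv ℝ P x‖ ≤ (N*m)⁻¹ * G := by
          apply mul_le_mul _ hPG (norm_nonneg _) (le_of_lt (inv_pos.mpr hNm))
          exact inv_anti₀ hNm (by linarith)
      _ = G / (N * m) := by rw [inv_mul_eq_div]
  have hb2 : ‖((P x + S x)⁻¹ - (S x)⁻¹) • fderiv ℝ S x‖ ≤ M * G / (N * m ^ 2) := by
    rw [norm_smul, Real.norm_eq_abs]
    have habs : |(P x + S x)⁻¹ - (S x)⁻¹| = P x / (S x * (P x + S x)) := by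
      rw [abs_of_nonpos (by
        apply sub_nonpos.mpr
        exact inv_anti₀ hs (by linarith)), neg_sub]
      field_simp
      ring
    rw [habs]
    have hfrac : P x / (S x * (P x + S x)) ≤ M / ((N*m) * (N*m)) := by
      apply div_le_div₀ hM.le hPM (mul_pos hNm hNm)
      apply mul_le_mul hS (by linarith) hNm.le hs.le
    calc P x / (S x * (P x + S x)) * ‖fderiv ℝ S x‖
        ≤ M / ((N*m) * (N*m)) * (N * G) := by
          apply mul_le_mul hfrac hSG (norm_nonneg _)
          positivity
      _ = M * G / (N * m ^ 2) := by field_simp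
  calc ‖(P x + S x)⁻¹ • fderiv ℝ P x + ((P x + S x)⁻¹ - (S x)⁻¹) • fderiv ℝ S x‖
      ≤ ‖(P x + S x)⁻¹ • fderiv ℝ P x‖ + ‖((P x + S x)⁻¹ - (S x)⁻¹) • fderiv ℝ S x‖ :=
        norm_add_le _ _
    _ ≤ G / (N * m) + M * G / (N * m ^ 2) := add_le_add hb1 hb2
end
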